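/- With independent finite inputs X_1,...,X_M and output Y, a rate point r belongs to the front facet F_S if and only if its restriction r_{S^c} lies in the fundamental region of the channel with inputs X_{S^c} and output Y, and its restriction r_S lies in the dominant facet of the channel with inputs X_S and outputs (Y, X_{S^c}); i.e., r ∈ F_S iff (∀L ⊆ S^c: ∑_{i∈L} r_i ≤ I(X_L;Y|X_{S^c∖L})) and (∀L ⊆ S: ∑_{i∈L} r_i ≤ I(X_L;Y|X_{L^c}), with equality for L = S). -/

import Mathlib

open Finset

/-- Marginal joint pmf of `(X_S, Y)` obtained from the joint pmf `p` of
`(X_1,…,X_M, Y)` by summing out inputs outside `S`; evaluated at the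
values that `x` takes on `S` and at `y`. -/
noncomputable def margXY {M : ℕ} {α : Fin M → Type*} [∀ i, Fintype (α i)]
    [∀ i, DecidableEq (α i)] {β : Type*} [Fintype β]
    (p : (∀ i, α i) → β → ℝ) (S : Finset (Fin M)) (x : ∀ i, α i) (y : β) : ℝ :=
  ∑ x' : ∀ i, α i, if ∀ i ∈ S, x' i = x i then p x' y else 0

/-- Marginal pmf of `X_S`. -/
noncomputable def margX {M : ℕ} {α : Fin M → Type*} [∀ i, Fintype (α i)]
    [∀ i, DecidableEq (α i)] {β : Type*} [Fintype β]
    (p : (∀ i, α i) → β → ℝ) (S : Finset (Fin M)) (x : ∀ i, α i) : ℝ :=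
  ∑ y : β, margXY p S x y

/-- Conditional mutual information `I(X_S; Y | X_A)`, via the standard
sum formula. -/
noncomputable def condMI {M : ℕ} {α : Fin M → Type*} [∀ i, Fintype (α i)]
    [∀ i, DecidableEq (α i)] {β : Type*} [Fintype β]
    (p : (∀ i, α i) → β → ℝ) (S A : Finset (Fin M)) : ℝ :=
  ∑ x : ∀ i, α i, ∑ y : β,
    p x y * Real.log ((margXY p (S ∪ A) x y * margX p A x) /
      (margX p (S ∪ A) x * margXY p A x y))

/-- `p` is a probability mass function. -/
def IsProb {M : ℕ} {α : Fin M → Type*} [∀ i, Fintype (α i)]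
    [∀ i, DecidableEq (α i)] {β : Type*} [Fintype β]
    (p : (∀ i, α i) → β → ℝ) : Prop :=
  (∀ x y, 0 ≤ p x y) ∧ ∑ x : ∀ i, α i, ∑ y : β, p x y = 1

/-- The inputs `X_1, …, X_M` are mutually independent. -/
def IndepInputs {M : ℕ} {α : Fin M → Type*} [∀ i, Fintype (α i)]
    [∀ i, DecidableEq (α i)] {β : Type*} [Fintype β]
    (p : (∀ i, α i) → β → ℝ) : Prop :=
  ∀ x : ∀ i, α i, margX p Finset.univ x = ∏ i : Fin M, margX p {i} x

/-- Membership in the fundamental region `R`. -/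
def memR {M : ℕ} {α : Fin M → Type*} [∀ i, Fintype (α i)]
    [∀ i, DecidableEq (α i)] {β : Type*} [Fintype β]
    (p : (∀ i, α i) → β → ℝ) (r : Fin M → ℝ) : Prop :=
  (∀ i, 0 ≤ r i) ∧ ∀ S : Finset (Fin M), ∑ i ∈ S, r i ≤ condMI p S Sᶜ

/-- Membership in the front facet `F_S`. -/
def memF {M : ℕ} {α : Fin M → Type*} [∀ i, Fintype (α i)]
    [∀ i, DecidableEq (α i)] {β : Type*} [Fintype β]
    (p : (∀ i, α i) → β → ℝ) (S : Finset (Fin M)) (r : Fin M → ℝ) : Prop :=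
  memR p r ∧ ∑ i ∈ S, r i = condMI p S Sᶜ

/-- Membership in the back face `B_A`. -/
def memB {M : ℕ} {α : Fin M → Type*} [∀ i, Fintype (α i)]
    [∀ i, DecidableEq (α i)] {β : Type*} [Fintype β]
    (p : (∀ i, α i) → β → ℝ) (A : Finset (Fin M)) (r : Fin M → ℝ) : Prop :=
  memR p r ∧ ∀ i ∈ A, r i = 0

section Aux
variable {M : ℕ} {α : Fin M → Type*} [∀ i, Fintype (α i)]
    [∀ i, DecidableEq (α i)] {β : Type*} [Fintype β]
    (p : (∀ i, α i) → β → ℝ)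

lemma margXY_nonneg (hp : IsProb p) (T : Finset (Fin M)) (x : ∀ i, α i) (y : β) :
    0 ≤ margXY p T x y :=
  Finset.sum_nonneg fun x' _ => by
    split_ifs with h
    exacts [hp.1 x' y, le_rfl]

lemma le_margXY (hp : IsProb p) (T : Finset (Fin M)) (x : ∀ i, α i) (y : β) :
    p x y ≤ margXY p T x y := by
  have h := Finset.single_le_sum
    (f := fun x' => if ∀ i ∈ T, x' i = x i then p x' y else 0)
    (fun x' _ => by split_ifs with h; exacts [hp.1 x' y, le_rfl])
    (Finset.mem_univ x)
  simpa [margXY] using h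

lemma margX_nonneg (hp : IsProb p) (T : Finset (Fin M)) (x : ∀ i, α i) :
    0 ≤ margX p T x :=
  Finset.sum_nonneg fun y _ => margXY_nonneg p hp T x y

lemma margXY_le_margX (hp : IsProb p) (T : Finset (Fin M)) (x : ∀ i, α i) (y : β) :
    margXY p T x y ≤ margX p T x :=
  Finset.single_le_sum (fun y' _ => margXY_nonneg p hp T x y') (Finset.mem_univ y)

lemma margXY_anti (hp : IsProb p) {T U : Finset (Fin M)} (hTU : T ⊆ U)
    (x : ∀ i, α i) (y : β) : margXY p U x y ≤ margXY p T x y := by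
  apply Finset.sum_le_sum
  intro x' _
  split_ifs with h1 h2 h2
  · exact le_rfl
  · exact absurd (fun i hi => h1 i (hTU hi)) h2
  · exact hp.1 x' y
  · exact le_rfl

lemma margXY_local (T : Finset (Fin M)) {x x' : ∀ i, α i}
    (h : ∀ i ∈ T, x' i = x i) (y : β) : margXY p T x' y = margXY p T x y := by
  apply Finset.sum_congr rfl
  intro x'' _
  by_cases hc : ∀ i ∈ T, x'' i = x' i
  · rw [if_pos hc, if_pos (fun i hi => (hc i hi).trans (h i hi))]
  · rw [if_neg hc, if_neg (fun hc' => hc (fun i hi => (hc' i hi).trans (h i hi).symm))]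

lemma margX_local (T : Finset (Fin M)) {x x' : ∀ i, α i}
    (h : ∀ i ∈ T, x' i = x i) : margX p T x' = margX p T x :=
  Finset.sum_congr rfl fun y _ => margXY_local p T h y

lemma nonempty_of_prob (hp : IsProb p) (i : Fin M) : Nonempty (α i) := by
  by_contra h
  have he : IsEmpty (∀ j, α j) := ⟨fun f => (not_nonempty_iff.mp h).elim (f i)⟩
  have := hp.2
  rw [Finset.univ_eq_empty, Finset.sum_empty] at this
  exact zero_ne_one this

set_option maxHeartbeats 1000000 in
/-- factorization of a sum over tuples constrained on `T` of a product. -/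
lemma sum_agree_prod (T : Finset (Fin M)) (x : ∀ i, α i) (f : ∀ i, α i → ℝ) :
    (∑ x' : ∀ i, α i, if ∀ i ∈ T, x' i = x i then ∏ i, f i (x' i) else 0)
      = (∏ i ∈ T, f i (x i)) * ∏ i ∈ Tᶜ, ∑ a, f i a := by
  have h1 : ∀ x' : ∀ i, α i,
      (if ∀ i ∈ T, x' i = x i then ∏ i, f i (x' i) else 0)
        = ∏ i, (if i ∈ T then (if x' i = x i then f i (x' i) else 0) else f i (x' i)) := by
    intro x'
    rw [← Finset.prod_mul_prod_compl T
      (fun i => if i ∈ T then (if x' i = x i then f i (x' i) else 0) else f i (x' i))]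
    have e1 : ∏ i ∈ T, (if i ∈ T then (if x' i = x i then f i (x' i) else 0) else f i (x' i))
        = (if ∀ i ∈ T, x' i = x i then 1 else 0) * ∏ i ∈ T, f i (x' i) := by
      calc ∏ i ∈ T, (if i ∈ T then (if x' i = x i then f i (x' i) else 0) else f i (x' i))
          = ∏ i ∈ T, ((if x' i = x i then (1:ℝ) else 0) * f i (x' i)) := by
            apply Finset.prod_congr rfl
            intro i hi
            rw [if_pos hi]
            split_ifs <;> ring
        _ = (∏ i ∈ T, if x' i = x i then (1:ℝ) else 0) * ∏ i ∈ T, f i (x' i) :=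
            Finset.prod_mul_distrib
        _ = (if ∀ i ∈ T, x' i = x i then 1 else 0) * ∏ i ∈ T, f i (x' i) := by
            rw [Finset.prod_boole]
            convert rfl
    have e2 : ∏ i ∈ Tᶜ, (if i ∈ T then (if x' i = x i then f i (x' i) else 0) else f i (x' i))
        = ∏ i ∈ Tᶜ, f i (x' i) := by
      apply Finset.prod_congr rfl
      intro i hi
      rw [if_neg (Finset.mem_compl.mp hi)]
    rw [e1, e2]
    split_ifs with h
    · rw [one_mul, Finset.prod_mul_prod_compl]
    · ring
  calc (∑ x' : ∀ i, α i, if ∀ i ∈ T, x' i = x i then ∏ i, f i (x' i) else 0)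
      = ∑ x' : ∀ i, α i, ∏ i,
          (if i ∈ T then (if x' i = x i then f i (x' i) else 0) else f i (x' i)) :=
        Finset.sum_congr rfl fun x' _ => h1 x'
    _ = ∏ i, ∑ a : α i, (if i ∈ T then (if a = x i then f i a else 0) else f i a) :=
        (Fintype.prod_sum
          (fun i a => if i ∈ T then (if a = x i then f i a else 0) else f i a)).symm
    _ = (∏ i ∈ T, f i (x i)) * ∏ i ∈ Tᶜ, ∑ a, f i a := by
        rw [← Finset.prod_mul_prod_compl T
          (fun i => ∑ a : α i, (if i ∈ T then (if a = x i then f i a else 0) else f i a))]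
        congr 1
        · apply Finset.prod_congr rfl
          intro i hi
          simp only [if_pos hi]
          simp
        · apply Finset.prod_congr rfl
          intro i hi
          simp only [if_neg (Finset.mem_compl.mp hi)]

lemma count_agree (T : Finset (Fin M)) (x : ∀ i, α i) :
    (∑ x' : ∀ i, α i, if ∀ i ∈ T, x' i = x i then (1:ℝ) else 0)
      = ∏ i ∈ Tᶜ, (Fintype.card (α i) : ℝ) := by
  have := sum_agree_prod (α := α) T x (fun _ _ => (1:ℝ))
  simpa using this

lemma sum_margXY_mul (T : Finset (Fin M)) (y : β) (g : (∀ i, α i) → ℝ) :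
    ∑ x : ∀ i, α i, margXY p T x y * g x
      = ∑ x : ∀ i, α i, p x y *
          ∑ x' : ∀ i, α i, (if ∀ i ∈ T, x' i = x i then g x' else 0) := by
  unfold margXY
  calc ∑ x : ∀ i, α i, (∑ x' : ∀ i, α i, if ∀ i ∈ T, x' i = x i then p x' y else 0) * g x
      = ∑ x : ∀ i, α i, ∑ x' : ∀ i, α i,
          (if ∀ i ∈ T, x' i = x i then p x' y * g x else 0) := by
        apply Finset.sum_congr rfl; intro x _
        rw [Finset.sum_mul]
        apply Finset.sum_congr rfl; intro x' _
        split_ifs <;> ring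
    _ = ∑ x' : ∀ i, α i, ∑ x : ∀ i, α i,
          (if ∀ i ∈ T, x' i = x i then p x' y * g x else 0) := Finset.sum_comm
    _ = ∑ x : ∀ i, α i, ∑ x' : ∀ i, α i,
          (if ∀ i ∈ T, x i = x' i then p x y * g x' else 0) := rfl
    _ = ∑ x : ∀ i, α i, p x y *
          ∑ x' : ∀ i, α i, (if ∀ i ∈ T, x' i = x i then g x' else 0) := by
        apply Finset.sum_congr rfl; intro x _
        rw [Finset.mul_sum]
        apply Finset.sum_congr rfl; intro x' _
        have : (∀ i ∈ T, x i = x' i) ↔ (∀ i ∈ T, x' i = x i) := by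
          constructor <;> exact fun h i hi => (h i hi).symm
        rw [if_congr this rfl rfl]
        split_ifs <;> ring

lemma sum_margXY_mul_local (T : Finset (Fin M)) (y : β) (g : (∀ i, α i) → ℝ)
    (hloc : ∀ x x' : ∀ i, α i, (∀ i ∈ T, x' i = x i) → g x' = g x) :
    ∑ x : ∀ i, α i, margXY p T x y * g x
      = (∏ i ∈ Tᶜ, (Fintype.card (α i) : ℝ)) * ∑ x : ∀ i, α i, p x y * g x := by
  rw [sum_margXY_mul]
  rw [Finset.mul_sum]
  apply Finset.sum_congr rfl; intro x _
  have h1 : ∑ x' : ∀ i, α i, (if ∀ i ∈ T, x' i = x i then g x' else 0)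
      = (∏ i ∈ Tᶜ, (Fintype.card (α i) : ℝ)) * g x := by
    calc ∑ x' : ∀ i, α i, (if ∀ i ∈ T, x' i = x i then g x' else 0)
        = ∑ x' : ∀ i, α i, (if ∀ i ∈ T, x' i = x i then (1:ℝ) else 0) * g x := by
          apply Finset.sum_congr rfl; intro x' _
          split_ifs with h
          · rw [one_mul]; exact hloc x x' h
          · ring
      _ = (∑ x' : ∀ i, α i, if ∀ i ∈ T, x' i = x i then (1:ℝ) else 0) * g x :=
          (Finset.sum_mul _ _ _).symm
      _ = (∏ i ∈ Tᶜ, (Fintype.card (α i) : ℝ)) * g x := by rw [count_agree]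
  rw [h1]; ring

lemma count_agree2 (W T : Finset (Fin M)) (x x'' : ∀ i, α i) :
    (∑ x' : ∀ i, α i,
        if (∀ i ∈ W, x' i = x i) ∧ (∀ i ∈ T, x'' i = x' i) then (1:ℝ) else 0)
      = if ∀ i ∈ W ∩ T, x'' i = x i then ∏ i ∈ (W ∪ T)ᶜ, (Fintype.card (α i) : ℝ)
        else 0 := by
  by_cases hx : ∀ i ∈ W ∩ T, x'' i = x i
  · rw [if_pos hx]
    classical
    set x₀ : ∀ i, α i := fun i => if i ∈ W then x i else x'' i with hx₀
    have key : ∀ x' : ∀ i, α i,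
        ((∀ i ∈ W, x' i = x i) ∧ (∀ i ∈ T, x'' i = x' i)) ↔ (∀ i ∈ W ∪ T, x' i = x₀ i) := by
      intro x'
      constructor
      · rintro ⟨h1, h2⟩ i hi
        rw [hx₀]
        by_cases hiW : i ∈ W
        · simp only [if_pos hiW]; exact h1 i hiW
        · have hiT : i ∈ T := (Finset.mem_union.mp hi).resolve_left hiW
          simp only [if_neg hiW]; exact (h2 i hiT).symm
      · intro h
        constructor
        · intro i hi
          have h5 := h i (Finset.mem_union_left _ hi)
          dsimp only [x₀] at h5
          rwa [if_pos hi] at h5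
        · intro i hi
          have h5 := h i (Finset.mem_union_right _ hi)
          dsimp only [x₀] at h5
          by_cases hiW : i ∈ W
          · rw [h5, if_pos hiW]
            exact hx i (Finset.mem_inter.mpr ⟨hiW, hi⟩)
          · rw [h5, if_neg hiW]
      
    calc (∑ x' : ∀ i, α i,
        if (∀ i ∈ W, x' i = x i) ∧ (∀ i ∈ T, x'' i = x' i) then (1:ℝ) else 0)
        = ∑ x' : ∀ i, α i, if ∀ i ∈ W ∪ T, x' i = x₀ i then (1:ℝ) else 0 := by
          apply Finset.sum_congr rfl; intro x' _
          rw [if_congr (key x') rfl rfl]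
      _ = ∏ i ∈ (W ∪ T)ᶜ, (Fintype.card (α i) : ℝ) := count_agree _ _
  · rw [if_neg hx]
    apply Finset.sum_eq_zero
    intro x' _
    rw [if_neg]
    rintro ⟨h1, h2⟩
    exact hx fun i hi => by
      rw [h2 i (Finset.mem_inter.mp hi).2, h1 i (Finset.mem_inter.mp hi).1]

lemma sum_agree_margXY (W T : Finset (Fin M)) (x : ∀ i, α i) (y : β) :
    (∑ x' : ∀ i, α i, if ∀ i ∈ W, x' i = x i then margXY p T x' y else 0)
      = (∏ i ∈ (W ∪ T)ᶜ, (Fintype.card (α i) : ℝ)) * margXY p (W ∩ T) x y := by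
  unfold margXY
  calc (∑ x' : ∀ i, α i, if ∀ i ∈ W, x' i = x i then
          (∑ x'' : ∀ i, α i, if ∀ i ∈ T, x'' i = x' i then p x'' y else 0) else 0)
      = ∑ x' : ∀ i, α i, ∑ x'' : ∀ i, α i,
          (if (∀ i ∈ W, x' i = x i) ∧ (∀ i ∈ T, x'' i = x' i) then p x'' y else 0) := by
        apply Finset.sum_congr rfl; intro x' _
        split_ifs with h
        · apply Finset.sum_congr rfl; intro x'' _
          by_cases h2 : ∀ i ∈ T, x'' i = x' i
          · rw [if_pos h2, if_pos ⟨h, h2⟩]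
          · rw [if_neg h2, if_neg]
            rintro ⟨-, h3⟩
            exact h2 h3
        · symm
          apply Finset.sum_eq_zero
          intro x'' _
          rw [if_neg]
          rintro ⟨h1, -⟩
          exact h h1
    _ = ∑ x'' : ∀ i, α i, ∑ x' : ∀ i, α i,
          (if (∀ i ∈ W, x' i = x i) ∧ (∀ i ∈ T, x'' i = x' i) then p x'' y else 0) :=
        Finset.sum_comm
    _ = ∑ x'' : ∀ i, α i, p x'' y *
          (if ∀ i ∈ W ∩ T, x'' i = x i then ∏ i ∈ (W ∪ T)ᶜ, (Fintype.card (α i) : ℝ)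
            else 0) := by
        apply Finset.sum_congr rfl; intro x'' _
        rw [← count_agree2 W T x x'', Finset.mul_sum]
        apply Finset.sum_congr rfl; intro x' _
        split_ifs <;> ring
    _ = (∏ i ∈ (W ∪ T)ᶜ, (Fintype.card (α i) : ℝ)) *
          ∑ x'' : ∀ i, α i, (if ∀ i ∈ W ∩ T, x'' i = x i then p x'' y else 0) := by
        rw [Finset.mul_sum]
        apply Finset.sum_congr rfl; intro x'' _
        split_ifs <;> ring


lemma margXY_univ (x : ∀ i, α i) (y : β) : margXY p Finset.univ x y = p x y := by
  unfold margXY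
  have h : ∀ x' : ∀ i, α i, (∀ i ∈ Finset.univ, x' i = x i) ↔ x' = x := by
    intro x'
    simp [funext_iff]
  calc (∑ x' : ∀ i, α i, if ∀ i ∈ Finset.univ, x' i = x i then p x' y else 0)
      = ∑ x' : ∀ i, α i, if x' = x then p x' y else 0 :=
        Finset.sum_congr rfl fun x' _ => if_congr (h x') rfl rfl
    _ = p x y := by rw [Finset.sum_ite_eq' Finset.univ x (fun x' => p x' y)]; simp

lemma margX_univ (x : ∀ i, α i) : margX p Finset.univ x = ∑ y : β, p x y :=
  Finset.sum_congr rfl fun y _ => margXY_univ p x y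

lemma sum_update_margX_single (hp : IsProb p) (i : Fin M) (x : ∀ i, α i) :
    ∑ a : α i, margX p {i} (Function.update x i a) = 1 := by
  unfold margX margXY
  have h : ∀ (a : α i) (x' : ∀ j, α j),
      (∀ j ∈ ({i} : Finset (Fin M)), x' j = Function.update x i a j) ↔ x' i = a := by
    intro a x'
    simp [Function.update_self]
  calc ∑ a : α i, ∑ y : β, ∑ x' : ∀ j, α j,
        (if ∀ j ∈ ({i} : Finset (Fin M)), x' j = Function.update x i a j then p x' y else 0)
      = ∑ a : α i, ∑ y : β, ∑ x' : ∀ j, α j, (if x' i = a then p x' y else 0) := by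
        apply Finset.sum_congr rfl; intro a _
        apply Finset.sum_congr rfl; intro y _
        exact Finset.sum_congr rfl fun x' _ => if_congr (h a x') rfl rfl
    _ = ∑ y : β, ∑ x' : ∀ j, α j, ∑ a : α i, (if x' i = a then p x' y else 0) := by
        rw [Finset.sum_comm]
        apply Finset.sum_congr rfl; intro y _
        rw [Finset.sum_comm]
    _ = ∑ y : β, ∑ x' : ∀ j, α j, p x' y := by
        apply Finset.sum_congr rfl; intro y _
        apply Finset.sum_congr rfl; intro x' _
        rw [Finset.sum_ite_eq Finset.univ (x' i) (fun _ => p x' y)]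
        simp
    _ = 1 := by rw [Finset.sum_comm]; exact hp.2

lemma margX_eq_prod (hp : IsProb p) (hind : IndepInputs p) (T : Finset (Fin M))
    (x : ∀ i, α i) : margX p T x = ∏ i ∈ T, margX p {i} x := by
  have h1 : margX p T x = ∑ x' : ∀ i, α i,
      (if ∀ i ∈ T, x' i = x i then ∑ y : β, p x' y else 0) := by
    unfold margX margXY
    rw [Finset.sum_comm]
    apply Finset.sum_congr rfl; intro x' _
    split_ifs with h
    · rfl
    · exact Finset.sum_eq_zero fun y _ => rfl
  have h2 : margX p T x = ∑ x' : ∀ i, α i,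
      (if ∀ i ∈ T, x' i = x i then
        ∏ i, margX p {i} (Function.update x i (x' i)) else 0) := by
    rw [h1]
    apply Finset.sum_congr rfl; intro x' _
    split_ifs with h
    · rw [← margX_univ, hind x']
      apply Finset.prod_congr rfl
      intro i _
      apply margX_local
      intro j hj
      rw [Finset.mem_singleton] at hj
      subst hj
      rw [Function.update_self]
    · rfl
  rw [h2, sum_agree_prod T x (fun i a => margX p {i} (Function.update x i a))]
  have h3 : ∀ i, margX p {i} (Function.update x i (x i)) = margX p {i} x := by
    intro i; rw [Function.update_eq_self]
  have h4 : ∏ i ∈ Tᶜ, (∑ a : α i, margX p {i} (Function.update x i a)) = 1 := by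
    apply Finset.prod_eq_one
    intro i _
    exact sum_update_margX_single p hp i x
  rw [h4, mul_one]
  exact Finset.prod_congr rfl fun i _ => h3 i

lemma margX_union (hp : IsProb p) (hind : IndepInputs p) {T U : Finset (Fin M)}
    (h : Disjoint T U) (x : ∀ i, α i) :
    margX p (T ∪ U) x = margX p T x * margX p U x := by
  rw [margX_eq_prod p hp hind, margX_eq_prod p hp hind T, margX_eq_prod p hp hind U,
    Finset.prod_union h]

lemma gibbs (hp : IsProb p) (u : (∀ i, α i) → β → ℝ)
    (hpos : ∀ x y, 0 < p x y → 0 < u x y)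
    (hsum : ∑ x : ∀ i, α i, ∑ y : β, p x y * u x y ≤ 1) :
    ∑ x : ∀ i, α i, ∑ y : β, p x y * Real.log (u x y) ≤ 0 := by
  have h1 : ∀ (x : ∀ i, α i) (y : β),
      p x y * Real.log (u x y) ≤ p x y * u x y - p x y := by
    intro x y
    rcases eq_or_lt_of_le (hp.1 x y) with h | h
    · rw [← h]; simp
    · have hu := hpos x y h
      have hl := Real.log_le_sub_one_of_pos hu
      nlinarith
  calc ∑ x : ∀ i, α i, ∑ y : β, p x y * Real.log (u x y)
      ≤ ∑ x : ∀ i, α i, ∑ y : β, (p x y * u x y - p x y) :=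
        Finset.sum_le_sum fun x _ => Finset.sum_le_sum fun y _ => h1 x y
    _ = (∑ x : ∀ i, α i, ∑ y : β, p x y * u x y) -
        (∑ x : ∀ i, α i, ∑ y : β, p x y) := by
        rw [← Finset.sum_sub_distrib]
        exact Finset.sum_congr rfl fun x _ => Finset.sum_sub_distrib _ _
    _ ≤ 0 := by rw [hp.2]; linarith


lemma pos_margXY (hp : IsProb p) (T : Finset (Fin M)) {x : ∀ i, α i} {y : β}
    (h : 0 < p x y) : 0 < margXY p T x y := lt_of_lt_of_le h (le_margXY p hp T x y)

lemma pos_margX (hp : IsProb p) (T : Finset (Fin M)) {x : ∀ i, α i} {y : β}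
    (h : 0 < p x y) : 0 < margX p T x :=
  lt_of_lt_of_le (pos_margXY p hp T h) (margXY_le_margX p hp T x y)

lemma chainMI (hp : IsProb p) (S L A : Finset (Fin M)) :
    condMI p (S ∪ L) A = condMI p L A + condMI p S (L ∪ A) := by
  unfold condMI
  rw [← Finset.sum_add_distrib]
  apply Finset.sum_congr rfl; intro x _
  rw [← Finset.sum_add_distrib]
  apply Finset.sum_congr rfl; intro y _
  rcases eq_or_lt_of_le (hp.1 x y) with h | h
  · rw [← h]; simp
  · have e : S ∪ (L ∪ A) = S ∪ L ∪ A := (Finset.union_assoc S L A).symm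
    rw [e]
    have q1 := pos_margXY p hp (S ∪ L ∪ A) h
    have q2 := pos_margXY p hp A h
    have q3 := pos_margXY p hp (L ∪ A) h
    have m1 := pos_margX p hp (S ∪ L ∪ A) (y := y) h
    have m2 := pos_margX p hp A (y := y) h
    have m3 := pos_margX p hp (L ∪ A) (y := y) h
    have ha : 0 < margXY p (L ∪ A) x y * margX p A x /
        (margX p (L ∪ A) x * margXY p A x y) :=
      div_pos (mul_pos q3 m2) (mul_pos m3 q2)
    have hb : 0 < margXY p (S ∪ L ∪ A) x y * margX p (L ∪ A) x /
        (margX p (S ∪ L ∪ A) x * margXY p (L ∪ A) x y) :=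
      div_pos (mul_pos q1 m3) (mul_pos m1 q3)
    have n1 : margXY p (S ∪ L ∪ A) x y ≠ 0 := ne_of_gt q1
    have n2 : margXY p A x y ≠ 0 := ne_of_gt q2
    have n3 : margXY p (L ∪ A) x y ≠ 0 := ne_of_gt q3
    have n4 : margX p (S ∪ L ∪ A) x ≠ 0 := ne_of_gt m1
    have n5 : margX p A x ≠ 0 := ne_of_gt m2
    have n6 : margX p (L ∪ A) x ≠ 0 := ne_of_gt m3
    rw [← mul_add]
    congr 1
    rw [← Real.log_mul (ne_of_gt ha) (ne_of_gt hb)]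
    congr 1
    rw [div_mul_div_comm, div_eq_div_iff (mul_pos m1 q2).ne'
      (mul_pos (mul_pos m3 q2) (mul_pos m1 q3)).ne']
    ring

lemma monoMI (hp : IsProb p) (hind : IndepInputs p) (B C D : Finset (Fin M))
    (hd : Disjoint (B ∪ C) D) :
    condMI p B C ≤ condMI p B (C ∪ D) := by
  classical
  set E : Finset (Fin M) := B ∪ C ∪ D with hE
  have hE1 : B ∪ (C ∪ D) = E := (Finset.union_assoc B C D).symm
  have hd' : ∀ i ∈ D, i ∉ B ∧ i ∉ C := by
    intro i hi
    have := Finset.disjoint_right.mp hd hi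
    rw [Finset.mem_union] at this
    tauto
  have hE2 : (C ∪ D) ∪ (B ∪ C) = E := by
    ext i
    simp only [hE, Finset.mem_union]
    tauto
  have hE3 : (C ∪ D) ∩ (B ∪ C) = C := by
    ext i
    simp only [Finset.mem_inter, Finset.mem_union]
    constructor
    · rintro ⟨h1 | h1, h2 | h2⟩ <;> first | assumption | (exact absurd ((hd' i h1).1 h2) (fun h => h)) 
    · intro h; exact ⟨Or.inl h, Or.inr h⟩
  have hCD : Disjoint C D := Finset.disjoint_of_subset_left Finset.subset_union_right hd
  have mCD : ∀ x : ∀ i, α i, margX p (C ∪ D) x = margX p C x * margX p D x :=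
    margX_union p hp hind hCD
  have mE : ∀ x : ∀ i, α i, margX p E x = margX p (B ∪ C) x * margX p D x :=
    margX_union p hp hind hd
  set u : (∀ i, α i) → β → ℝ := fun x y =>
    margXY p (C ∪ D) x y * margXY p (B ∪ C) x y / (margXY p E x y * margXY p C x y)
    with hu
  have hpos : ∀ (x : ∀ i, α i) (y : β), 0 < p x y → 0 < u x y := by
    intro x y h
    exact div_pos (mul_pos (pos_margXY p hp _ h) (pos_margXY p hp _ h))
      (mul_pos (pos_margXY p hp _ h) (pos_margXY p hp _ h))
  -- the sum bound
  have hc0 : ∀ i : Fin M, (0:ℝ) < (Fintype.card (α i) : ℝ) := by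
    intro i
    have := nonempty_of_prob p hp i
    exact_mod_cast Fintype.card_pos
  set c : ℝ := ∏ i ∈ Eᶜ, (Fintype.card (α i) : ℝ) with hcdef
  have hc : 0 < c := Finset.prod_pos fun i _ => hc0 i
  have hsub1 : C ∪ D ⊆ E := by rw [hE]; intro i hi; rw [Finset.mem_union] at hi ⊢
                               rcases hi with h | h
                               · exact Or.inl (Finset.mem_union_right _ h)
                               · exact Or.inr h
  have hsub2 : B ∪ C ⊆ E := by rw [hE]; exact Finset.subset_union_left
  have hsub3 : C ⊆ E := fun i hi => hsub2 (Finset.mem_union_right _ hi)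
  have key : ∀ y : β, ∑ x : ∀ i, α i, p x y * u x y ≤ ∑ x : ∀ i, α i, p x y := by
    intro y
    have uloc : ∀ x x' : ∀ i, α i, (∀ i ∈ E, x' i = x i) → u x' y = u x y := by
      intro x x' h
      rw [hu]
      dsimp only
      rw [margXY_local p (C ∪ D) (fun i hi => h i (hsub1 hi)),
        margXY_local p (B ∪ C) (fun i hi => h i (hsub2 hi)),
        margXY_local p C (fun i hi => h i (hsub3 hi)),
        margXY_local p E (fun i hi => h i hi)]
    have hA : ∑ x : ∀ i, α i, margXY p E x y * u x y
        = c * ∑ x : ∀ i, α i, p x y * u x y :=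
      sum_margXY_mul_local p E y (fun x => u x y) uloc
    have hB : ∀ x : ∀ i, α i, margXY p E x y * u x y
        ≤ margXY p (C ∪ D) x y * (margXY p (B ∪ C) x y / margXY p C x y) := by
      intro x
      rcases eq_or_lt_of_le (margXY_nonneg p hp E x y) with hqE | hqE
      · rw [hu]
        dsimp only
        rw [← hqE, zero_mul]
        exact mul_nonneg (margXY_nonneg p hp _ x y)
          (div_nonneg (margXY_nonneg p hp _ x y) (margXY_nonneg p hp _ x y))
      · rcases eq_or_lt_of_le (margXY_nonneg p hp C x y) with hqC | hqC
        · have h1 : margXY p (C ∪ D) x y = 0 := by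
            refine le_antisymm ?_ (margXY_nonneg p hp _ x y)
            rw [hqC]
            exact margXY_anti p hp Finset.subset_union_left x y
          rw [hu]
          dsimp only
          rw [h1]
          simp
        · apply le_of_eq
          rw [hu]
          dsimp only
          field_simp
    have hCsum : ∑ x : ∀ i, α i,
        margXY p (C ∪ D) x y * (margXY p (B ∪ C) x y / margXY p C x y)
        = ∑ x : ∀ i, α i, p x y * ∑ x' : ∀ i, α i,
            (if ∀ i ∈ C ∪ D, x' i = x i then
              margXY p (B ∪ C) x' y / margXY p C x' y else 0) :=
      sum_margXY_mul p (C ∪ D) y (fun x => margXY p (B ∪ C) x y / margXY p C x y)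
    have hD : ∀ x : ∀ i, α i,
        (∑ x' : ∀ i, α i, (if ∀ i ∈ C ∪ D, x' i = x i then
          margXY p (B ∪ C) x' y / margXY p C x' y else 0)) ≤ c := by
      intro x
      have e1 : (∑ x' : ∀ i, α i, (if ∀ i ∈ C ∪ D, x' i = x i then
          margXY p (B ∪ C) x' y / margXY p C x' y else 0))
          = (∑ x' : ∀ i, α i, (if ∀ i ∈ C ∪ D, x' i = x i then
              margXY p (B ∪ C) x' y else 0)) / margXY p C x y := by
        rw [Finset.sum_div]
        apply Finset.sum_congr rfl
        intro x' _
        split_ifs with h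
        · rw [margXY_local p C (fun i hi => h i (Finset.mem_union_left _ hi))]
        · rw [zero_div]
      rw [e1, sum_agree_margXY p (C ∪ D) (B ∪ C) x y, hE2, hE3, ← hcdef]
      rcases eq_or_lt_of_le (margXY_nonneg p hp C x y) with hqC | hqC
      · rw [← hqC, mul_zero, zero_div]
        exact hc.le
      · rw [mul_div_assoc, div_self (ne_of_gt hqC), mul_one]
    have step1 : c * ∑ x : ∀ i, α i, p x y * u x y ≤ c * ∑ x : ∀ i, α i, p x y := by
      rw [← hA]
      calc ∑ x : ∀ i, α i, margXY p E x y * u x y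
          ≤ ∑ x : ∀ i, α i,
              margXY p (C ∪ D) x y * (margXY p (B ∪ C) x y / margXY p C x y) :=
            Finset.sum_le_sum fun x _ => hB x
        _ = ∑ x : ∀ i, α i, p x y * ∑ x' : ∀ i, α i,
              (if ∀ i ∈ C ∪ D, x' i = x i then
                margXY p (B ∪ C) x' y / margXY p C x' y else 0) := hCsum
        _ ≤ ∑ x : ∀ i, α i, p x y * c :=
            Finset.sum_le_sum fun x _ =>
              mul_le_mul_of_nonneg_left (hD x) (hp.1 x y)
        _ = c * ∑ x : ∀ i, α i, p x y := by rw [← Finset.sum_mul]; ring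
    exact le_of_mul_le_mul_left step1 hc
  have hsum : ∑ x : ∀ i, α i, ∑ y : β, p x y * u x y ≤ 1 := by
    calc ∑ x : ∀ i, α i, ∑ y : β, p x y * u x y
        = ∑ y : β, ∑ x : ∀ i, α i, p x y * u x y := Finset.sum_comm
      _ ≤ ∑ y : β, ∑ x : ∀ i, α i, p x y := Finset.sum_le_sum fun y _ => key y
      _ = ∑ x : ∀ i, α i, ∑ y : β, p x y := Finset.sum_comm
      _ = 1 := hp.2
  have hg := gibbs p hp u hpos hsum
  -- difference identity
  have hdiff : condMI p B C - condMI p B (C ∪ D)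
      = ∑ x : ∀ i, α i, ∑ y : β, p x y * Real.log (u x y) := by
    unfold condMI
    rw [← Finset.sum_sub_distrib]
    apply Finset.sum_congr rfl; intro x _
    rw [← Finset.sum_sub_distrib]
    apply Finset.sum_congr rfl; intro y _
    rcases eq_or_lt_of_le (hp.1 x y) with h | h
    · rw [← h]; simp
    · rw [hE1]
      have q1 := pos_margXY p hp E h
      have q2 := pos_margXY p hp (C ∪ D) h
      have q3 := pos_margXY p hp (B ∪ C) h
      have q4 := pos_margXY p hp C h
      have m1 := pos_margX p hp E (y := y) h
      have m2 := pos_margX p hp (C ∪ D) (y := y) h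
      have m3 := pos_margX p hp C (y := y) h
      have m4 := pos_margX p hp (B ∪ C) (y := y) h
      have m5 := pos_margX p hp D (y := y) h
      have hR2 : 0 < margXY p E x y * margX p (C ∪ D) x /
          (margX p E x * margXY p (C ∪ D) x y) :=
        div_pos (mul_pos q1 m2) (mul_pos m1 q2)
      have hu' : 0 < u x y := hpos x y h
      have hfact : margXY p (B ∪ C) x y * margX p C x /
            (margX p (B ∪ C) x * margXY p C x y)
          = (margXY p E x y * margX p (C ∪ D) x /
              (margX p E x * margXY p (C ∪ D) x y)) * u x y := by
        rw [hu]
        dsimp only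
        rw [div_mul_div_comm, div_eq_div_iff (mul_pos m4 q4).ne'
          (mul_pos (mul_pos m1 q2) (mul_pos q1 q4)).ne', mCD x, mE x]
        ring
      rw [hfact, Real.log_mul hR2.ne' hu'.ne']
      ring
  linarith

end Aux

/-- Product decomposition of a front facet: `r ∈ F_S` iff `r_{Sᶜ}` lies in the
fundamental region of the channel with inputs `X_{Sᶜ}` and `r_S` lies in the
dominant facet of the channel with inputs `X_S` and outputs `(Y, X_{Sᶜ})`. -/
theorem stmt14 {M : ℕ} {α : Fin M → Type*} [∀ i, Fintype (α i)]
    [∀ i, DecidableEq (α i)] {β : Type*} [Fintype β]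
    (p : (∀ i, α i) → β → ℝ) (hp : IsProb p) (hind : IndepInputs p)
    (S : Finset (Fin M)) (r : Fin M → ℝ) (hr : ∀ i, 0 ≤ r i) :
    memF p S r ↔
      ((∀ L ⊆ Sᶜ, ∑ i ∈ L, r i ≤ condMI p L (Sᶜ \ L)) ∧
       (∀ L ⊆ S, ∑ i ∈ L, r i ≤ condMI p L Lᶜ) ∧
       ∑ i ∈ S, r i = condMI p S Sᶜ) := by
  constructor
  · rintro ⟨⟨-, hmem⟩, heq⟩
    refine ⟨?_, fun L _ => hmem L, heq⟩
    intro L hL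
    have hdisj : Disjoint S L := by
      rw [Finset.disjoint_right]
      intro i hi
      exact Finset.mem_compl.mp (hL hi)
    have e1 : (S ∪ L)ᶜ = Sᶜ \ L := by
      ext i
      simp only [Finset.mem_compl, Finset.mem_union, Finset.mem_sdiff]
      tauto
    have e2 : L ∪ Sᶜ \ L = Sᶜ := Finset.union_sdiff_of_subset hL
    have hchain := chainMI p hp S L ((S ∪ L)ᶜ)
    rw [e1, e2] at hchain
    have hsum := hmem (S ∪ L)
    rw [Finset.sum_union hdisj, e1, hchain, heq] at hsum
    linarith
  · rintro ⟨h1, h2, h3⟩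
    refine ⟨⟨hr, ?_⟩, h3⟩
    intro T
    set A : Finset (Fin M) := T ∩ S with hAdef
    set B : Finset (Fin M) := T \ S with hBdef
    have hA : A ⊆ S := Finset.inter_subset_right
    have hB : B ⊆ Sᶜ := fun i hi => Finset.mem_compl.mpr (Finset.mem_sdiff.mp hi).2
    have hT : A ∪ B = T := by
      rw [hAdef, hBdef, Finset.union_comm]
      exact Finset.sdiff_union_inter T S
    have hAB : Disjoint A B := by
      rw [Finset.disjoint_right]
      intro i hi
      exact fun hiA => (Finset.mem_sdiff.mp hi).2 (Finset.mem_inter.mp hiA).2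
    have e3 : B ∪ Tᶜ = Aᶜ := by
      ext i
      simp only [hAdef, hBdef, Finset.mem_union, Finset.mem_compl, Finset.mem_sdiff,
        Finset.mem_inter]
      tauto
    have e4 : (Sᶜ \ B) ∪ (S \ A) = Tᶜ := by
      ext i
      simp only [hAdef, hBdef, Finset.mem_union, Finset.mem_compl, Finset.mem_sdiff,
        Finset.mem_inter]
      by_cases hiS : i ∈ S <;> by_cases hiT : i ∈ T <;> tauto
    have hdisj2 : Disjoint (B ∪ (Sᶜ \ B)) (S \ A) := by
      rw [Finset.disjoint_right]
      intro i hi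
      have hiS : i ∈ S := (Finset.mem_sdiff.mp hi).1
      rw [Finset.mem_union]
      rintro (h | h)
      · exact Finset.mem_compl.mp (hB h) hiS
      · exact Finset.mem_compl.mp (Finset.mem_sdiff.mp h).1 hiS
    have hmono := monoMI p hp hind B (Sᶜ \ B) (S \ A) hdisj2
    rw [e4] at hmono
    have hchain := chainMI p hp A B Tᶜ
    rw [hT, e3] at hchain
    have hsA := h2 A hA
    have hsB := h1 B hB
    have hsplit : ∑ i ∈ T, r i = (∑ i ∈ A, r i) + ∑ i ∈ B, r i := by
      rw [← hT, Finset.sum_union hAB]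
    rw [hsplit, hchain]
    have := h1 B hB
    linarith
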